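/- Let He_n denote the n-th probabilists' Hermite polynomial. For every natural number m, ∫_ℝ x⁴·He_m(x)·He_{m+2}(x)·exp(−x²/2) dx = (4m + 6)·(m+2)!·√(2π). -/

import Mathlib

open Polynomial Real MeasureTheory

noncomputable section HermiteAux

/-- The Hermite polynomial viewed over `ℝ`. -/
def Hr (n : ℕ) : Polynomial ℝ := (Polynomial.hermite n).map (Int.castRingHom ℝ)

lemma Hr_coeff (n j : ℕ) : (Hr n).coeff j = (((Polynomial.hermite n).coeff j : ℤ) : ℝ) := by
  rw [Hr, Polynomial.coeff_map, eq_intCast]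

/-- The Gaussian-weighted integral functional. -/
def Jg (q : Polynomial ℝ) : ℝ := ∫ x : ℝ, q.eval x * Real.exp (-x ^ 2 / 2)

lemma integrable_pow_gauss (n : ℕ) :
    Integrable fun x : ℝ => x ^ n * Real.exp (-x ^ 2 / 2) := by
  have h := integrable_rpow_mul_exp_neg_mul_sq (b := (1:ℝ)/2) (by norm_num)
    (s := (n : ℝ)) (lt_of_lt_of_le neg_one_lt_zero (Nat.cast_nonneg n))
  refine h.congr (Filter.EventuallyEq.of_eq (funext fun x => ?_))
  rw [Real.rpow_natCast]
  congr 1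
  ring

lemma integrable_poly_gauss (q : Polynomial ℝ) :
    Integrable fun x : ℝ => q.eval x * Real.exp (-x ^ 2 / 2) := by
  have hfun : (fun x : ℝ => q.eval x * Real.exp (-x ^ 2 / 2)) =
      fun x => ∑ i ∈ Finset.range (q.natDegree + 1),
        q.coeff i * (x ^ i * Real.exp (-x ^ 2 / 2)) := by
    funext x
    rw [eval_eq_sum_range' (Nat.lt_succ_self _) x, Finset.sum_mul]
    exact Finset.sum_congr rfl fun i _ => by ring
  rw [hfun]
  exact integrable_finset_sum _ fun i _ => (integrable_pow_gauss i).const_mul _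

lemma integrable_gauss0 : Integrable fun x : ℝ => Real.exp (-x ^ 2 / 2) :=
  (integrable_pow_gauss 0).congr (Filter.EventuallyEq.of_eq (funext fun x => by simp))

lemma hasDerivAt_gauss (x : ℝ) :
    HasDerivAt (fun y : ℝ => Real.exp (-y ^ 2 / 2)) (-x * Real.exp (-x ^ 2 / 2)) x := by
  have h : HasDerivAt (fun y : ℝ => -y ^ 2 / 2) (-x) x := by
    have := ((hasDerivAt_pow 2 x).neg.div_const 2)
    simpa using this.congr_deriv (by ring)
  simpa [mul_comm] using h.exp

lemma Jg_add (p q : Polynomial ℝ) : Jg (p + q) = Jg p + Jg q := by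
  unfold Jg
  rw [← integral_add (integrable_poly_gauss p) (integrable_poly_gauss q)]
  simp [add_mul]

lemma Jg_sub (p q : Polynomial ℝ) : Jg (p - q) = Jg p - Jg q := by
  unfold Jg
  rw [← integral_sub (integrable_poly_gauss p) (integrable_poly_gauss q)]
  simp [sub_mul]

lemma Jg_X_mul (q : Polynomial ℝ) : Jg (X * q) = Jg (derivative q) := by
  have hzero : Jg (derivative q - X * q) = 0 := by
    unfold Jg
    refine integral_eq_zero_of_hasDerivAt_of_integrable
      (f := fun x => q.eval x * Real.exp (-x ^ 2 / 2)) ?_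
      (integrable_poly_gauss _) (integrable_poly_gauss q)
    intro x
    have h := (q.hasDerivAt x).mul (hasDerivAt_gauss x)
    refine h.congr_deriv ?_
    simp only [eval_sub, eval_mul, eval_X]
    ring
  have := Jg_sub (derivative q) (X * q)
  rw [hzero] at this
  linarith

lemma Hr_succ (n : ℕ) : Hr (n + 1) = X * Hr n - derivative (Hr n) := by
  unfold Hr
  rw [Polynomial.hermite_succ, Polynomial.map_sub, Polynomial.map_mul, map_X,
    Polynomial.derivative_map]

lemma Jg_hermite_step (p : Polynomial ℝ) (n : ℕ) :
    Jg (p * Hr (n + 1)) = Jg (derivative p * Hr n) := by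
  rw [Hr_succ]
  have h1 : p * (X * Hr n - derivative (Hr n)) =
      X * (p * Hr n) - p * derivative (Hr n) := by ring
  rw [h1, Jg_sub, Jg_X_mul, derivative_mul, Jg_add, add_sub_cancel_right]

lemma Jg_hermite_reduce (n : ℕ) : ∀ p : Polynomial ℝ,
    Jg (p * Hr n) = Jg ((⇑derivative)^[n] p) := by
  induction n with
  | zero =>
    intro p
    simp [Hr, Polynomial.hermite_zero]
  | succ n ih =>
    intro p
    rw [Jg_hermite_step, ih (derivative p), ← Function.iterate_succ_apply]

lemma gauss_moment_zero : (∫ x : ℝ, Real.exp (-x ^ 2 / 2)) = Real.sqrt (2 * Real.pi) := by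
  have h := integral_gaussian ((1:ℝ)/2)
  have h2 : (∫ x : ℝ, Real.exp (-((1:ℝ)/2) * x ^ 2)) = ∫ x : ℝ, Real.exp (-x ^ 2 / 2) := by
    congr 1; funext x; congr 1; ring
  rw [h2] at h
  rw [h, show Real.pi / ((1:ℝ)/2) = 2 * Real.pi by ring]

lemma gauss_moment_one : (∫ x : ℝ, x * Real.exp (-x ^ 2 / 2)) = 0 := by
  refine integral_eq_zero_of_hasDerivAt_of_integrable
    (f := fun x => -Real.exp (-x ^ 2 / 2)) (fun x => ?_) ?_ ?_
  · exact (hasDerivAt_gauss x).neg.congr_deriv (by ring)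
  · exact (integrable_pow_gauss 1).congr (Filter.EventuallyEq.of_eq (funext fun x => by simp))
  · exact integrable_gauss0.neg

lemma gauss_moment_two :
    (∫ x : ℝ, x ^ 2 * Real.exp (-x ^ 2 / 2)) = Real.sqrt (2 * Real.pi) := by
  have hzero : (∫ x : ℝ, (x ^ 2 * Real.exp (-x ^ 2 / 2) - Real.exp (-x ^ 2 / 2))) = 0 := by
    refine integral_eq_zero_of_hasDerivAt_of_integrable
      (f := fun x => -x * Real.exp (-x ^ 2 / 2)) (fun x => ?_) ?_ ?_
    · have h := ((hasDerivAt_id x).neg).mul (hasDerivAt_gauss x)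
      refine h.congr_deriv ?_
      simp only [Pi.neg_apply, id]
      ring
    · exact (integrable_pow_gauss 2).sub integrable_gauss0
    · exact ((integrable_pow_gauss 1).neg).congr
        (Filter.EventuallyEq.of_eq (funext fun x => by simp))
  have hs : (∫ x : ℝ, (x ^ 2 * Real.exp (-x ^ 2 / 2) - Real.exp (-x ^ 2 / 2)))
      = (∫ x : ℝ, x ^ 2 * Real.exp (-x ^ 2 / 2)) - ∫ x : ℝ, Real.exp (-x ^ 2 / 2) :=
    integral_sub (integrable_pow_gauss 2) integrable_gauss0
  have h0 := gauss_moment_zero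
  rw [hzero] at hs
  linarith

lemma nat_choose_two (k : ℕ) : 2 * ((k + 2).choose k) = (k + 2) * (k + 1) := by
  induction k with
  | zero => simp
  | succ k ih =>
    have h1 : (k + 3).choose (k + 1) = (k + 2).choose k + (k + 2).choose (k + 1) :=
      Nat.choose_succ_succ (k + 2) k
    have h2 : (k + 2).choose (k + 1) = k + 2 := by
      have := Nat.choose_symm (n := k + 2) (k := 1) (by omega)
      simpa [Nat.choose_one_right, show k + 2 - 1 = k + 1 by omega] using this
    calc 2 * ((k + 1 + 2).choose (k + 1))
        = 2 * ((k + 2).choose k) + 2 * ((k + 2).choose (k + 1)) := by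
          rw [show k + 1 + 2 = k + 3 by omega, h1]; ring
      _ = (k + 2) * (k + 1) + 2 * (k + 2) := by rw [ih, h2]
      _ = (k + 1 + 2) * (k + 1 + 1) := by ring

lemma nat_descFactorial_two (k : ℕ) : 2 * ((k + 2).descFactorial k) = (k + 2).factorial := by
  have h : (k + 2).factorial = (k + 2).descFactorial (k + 2) := (Nat.descFactorial_self _).symm
  rw [h, Nat.descFactorial_succ, Nat.descFactorial_succ]
  simp [show k + 2 - (k + 1) = 1 by omega, show k + 2 - k = 2 by omega]

lemma coeff_shift (m : ℕ) :
    ((Hr m * X ^ 4).coeff (m + 2)) = -((m : ℝ) * ((m : ℝ) - 1) / 2) := by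
  rw [Polynomial.coeff_mul_X_pow']
  match m with
  | 0 => norm_num
  | 1 => norm_num
  | (k + 2) =>
    rw [if_pos (by omega), show k + 2 + 2 - 4 = k by omega, Hr_coeff,
      show k + 2 = 2 * 1 + k by omega, Polynomial.coeff_hermite_explicit 1 k]
    have h2 : 2 * (((2 * 1 + k).choose k : ℕ) : ℝ) = ((k : ℝ) + 2) * ((k : ℝ) + 1) := by
      have := nat_choose_two k
      rw [show 2 * 1 + k = k + 2 by omega]
      exact_mod_cast congrArg (fun n : ℕ => (n : ℝ)) this
    have hdf : ((Nat.doubleFactorial (2 * 1 - 1) : ℕ) : ℝ) = 1 := by norm_num [Nat.doubleFactorial]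
    push_cast [hdf] at *
    push_cast
    nlinarith [h2]

end HermiteAux

/-- Matrix element of `x⁴` between Hermite functions two levels apart:
`∫ x⁴·He_m(x)·He_{m+2}(x)·exp(−x²/2) dx = (4m + 6)·(m+2)!·√(2π)`. -/
theorem hermite_x4_matrix_element (m : ℕ) :
    ∫ x : ℝ, x ^ 4 * (Polynomial.aeval x (Polynomial.hermite m))
        * (Polynomial.aeval x (Polynomial.hermite (m + 2))) * Real.exp (-x ^ 2 / 2)
      = (4 * (m : ℝ) + 6) * ((m + 2).factorial : ℝ) * Real.sqrt (2 * Real.pi) := by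
  have haev : ∀ (n : ℕ) (x : ℝ), (Polynomial.aeval x (Polynomial.hermite n)) = (Hr n).eval x := by
    intro n x
    rw [Polynomial.aeval_def, Hr, Polynomial.eval_map, algebraMap_int_eq]
  have hL : (∫ x : ℝ, x ^ 4 * (Polynomial.aeval x (Polynomial.hermite m))
        * (Polynomial.aeval x (Polynomial.hermite (m + 2))) * Real.exp (-x ^ 2 / 2))
      = Jg ((Hr m * X ^ 4) * Hr (m + 2)) := by
    unfold Jg
    congr 1; funext x
    rw [haev, haev]
    simp only [eval_mul, eval_pow, eval_X]
    ring
  rw [hL, Jg_hermite_reduce]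
  set p : Polynomial ℝ := Hr m * X ^ 4 with hp
  set q : Polynomial ℝ := (⇑derivative)^[m + 2] p with hq
  -- degree bound
  have hdegp : p.natDegree ≤ m + 4 := by
    refine le_trans (Polynomial.natDegree_mul_le) ?_
    have h1 : (Hr m).natDegree ≤ m := by
      refine le_trans Polynomial.natDegree_map_le ?_
      simp [Polynomial.natDegree_hermite]
    have h2 : (X ^ 4 : Polynomial ℝ).natDegree ≤ 4 := by simp
    omega
  have hdegq : q.natDegree < 3 := by
    have := Polynomial.natDegree_iterate_derivative p (m + 2)
    rw [← hq] at this
    omega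
  -- coefficients
  have hc0 : q.coeff 0 = ((m + 2).factorial : ℝ) * (-((m : ℝ) * ((m : ℝ) - 1) / 2)) := by
    rw [hq, Polynomial.coeff_iterate_derivative, zero_add, Nat.descFactorial_self,
      hp, coeff_shift m, nsmul_eq_mul]
  have hc1 : q.coeff 1 = 0 := by
    rw [hq, Polynomial.coeff_iterate_derivative]
    have hz : p.coeff (1 + (m + 2)) = 0 := by
      rw [hp, Polynomial.coeff_mul_X_pow']
      match m with
      | 0 => norm_num
      | k + 1 =>
        rw [if_pos (by omega), show 1 + (k + 1 + 2) - 4 = k by omega, Hr_coeff,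
          Polynomial.coeff_hermite_of_odd_add (n := k + 1) (k := k) ⟨k, by omega⟩,
          Int.cast_zero]
    rw [hz, smul_zero]
  have hc2 : q.coeff 2 = ((m + 4).descFactorial (m + 2) : ℝ) := by
    rw [hq, Polynomial.coeff_iterate_derivative, show (2:ℕ) + (m + 2) = m + 4 from by omega]
    have hz : p.coeff (m + 4) = 1 := by
      rw [hp, Polynomial.coeff_mul_X_pow', if_pos (by omega),
        show m + 4 - 4 = m by omega, Hr_coeff, Polynomial.coeff_hermite_self, Int.cast_one]
    rw [hz, nsmul_eq_mul, mul_one]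
  -- evaluate Jg q
  have hJq : Jg q = q.coeff 0 * Real.sqrt (2 * Real.pi)
      + q.coeff 2 * Real.sqrt (2 * Real.pi) := by
    unfold Jg
    have hfun : (fun x : ℝ => q.eval x * Real.exp (-x ^ 2 / 2)) =
        fun x => ∑ i ∈ Finset.range 3, q.coeff i * (x ^ i * Real.exp (-x ^ 2 / 2)) := by
      funext x
      rw [eval_eq_sum_range' hdegq x, Finset.sum_mul]
      exact Finset.sum_congr rfl fun i _ => by ring
    rw [hfun, integral_finset_sum _ (fun i _ => (integrable_pow_gauss i).const_mul _)]
    rw [Finset.sum_range_succ, Finset.sum_range_succ, Finset.sum_range_one]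
    rw [integral_const_mul, integral_const_mul, integral_const_mul]
    have h0 : (∫ x : ℝ, x ^ 0 * Real.exp (-x ^ 2 / 2)) = Real.sqrt (2 * Real.pi) := by
      rw [← gauss_moment_zero]; congr 1; funext x; simp
    have h1 : (∫ x : ℝ, x ^ 1 * Real.exp (-x ^ 2 / 2)) = 0 := by
      rw [← gauss_moment_one]; congr 1; funext x; simp
    rw [h0, h1, gauss_moment_two, hc1]
    ring
  rw [hJq, hc0, hc2]
  -- final arithmetic
  have hdf : 2 * ((m + 4).descFactorial (m + 2)) = (m + 4).factorial :=
    nat_descFactorial_two (m + 2)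
  have hfact : ((m + 4).factorial : ℝ)
      = ((m : ℝ) + 4) * ((m : ℝ) + 3) * ((m + 2).factorial : ℝ) := by
    rw [show m + 4 = (m + 3) + 1 by omega, Nat.factorial_succ,
      show m + 3 = (m + 2) + 1 by omega, Nat.factorial_succ]
    push_cast
    ring
  have hdfr : ((m + 4).descFactorial (m + 2) : ℝ)
      = ((m : ℝ) + 4) * ((m : ℝ) + 3) * ((m + 2).factorial : ℝ) / 2 := by
    have hcast : 2 * (((m + 4).descFactorial (m + 2) : ℕ) : ℝ) = ((m + 4).factorial : ℝ) :=
      by exact_mod_cast congrArg (fun n : ℕ => (n : ℝ)) hdf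
    rw [hfact] at hcast
    linarith
  rw [hdfr]
  ring
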